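/- Let A ∈ ℝ^{n×n}, B^m ∈ ℝ^{n×m}, B^p ∈ ℝ^{n×r}, C ∈ ℝ^{p×n}, and let U ∈ ℝ^{m×N}, W ∈ ℝ^{r×N}, X ∈ ℝ^{n×N} be data matrices such that [U; W; X] has full row rank m + r + n. Define Ẋ := A X + B^m U + B^p W and Ẏ := C Ẋ. Then rank([U; Ẏ; X]) = rank([U; X; Ẋ]) if and only if rank(C B^p) = rank(B^p). -/

import Mathlib

open Matrix Module

section helpers

lemma rank_mul_of_full_row {k t N : Type*} [Fintype k] [Fintype t] [Fintype N]
    (M : Matrix t k ℝ) (Z : Matrix k N ℝ) (hZ : Z.rank = Fintype.card k) :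
    (M * Z).rank = M.rank := by
  have hsurj : LinearMap.range Z.mulVecLin = ⊤ := by
    apply Submodule.eq_top_of_finrank_eq
    rw [← Matrix.rank, hZ, Module.finrank_pi]
  rw [Matrix.rank, Matrix.mulVecLin_mul, LinearMap.range_comp_of_range_eq_top _ hsurj,
    Matrix.rank]

lemma rank_submatrix_equiv {k l m n : Type*} [Fintype k] [Fintype l] [Fintype m] [Fintype n]
    (A : Matrix k l ℝ) (e₁ : m ≃ k) (e₂ : n ≃ l) :
    (A.submatrix e₁ e₂).rank = A.rank := by
  rw [Matrix.rank, Matrix.rank, Matrix.mulVecLin_submatrix]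
  have h1 : LinearMap.range (A.mulVecLin ∘ₗ LinearMap.funLeft ℝ ℝ ⇑e₂.symm)
      = LinearMap.range A.mulVecLin :=
    LinearMap.range_comp_of_range_eq_top _ (LinearMap.range_eq_top.mpr
      (LinearMap.funLeft_surjective_of_injective ℝ ℝ _ e₂.symm.injective))
  rw [LinearMap.range_comp, h1]
  exact LinearEquiv.finrank_map_eq (LinearEquiv.funCongrLeft ℝ ℝ e₁) _

lemma range_prodMap' {M₁ M₂ M₃ M₄ : Type*} [AddCommGroup M₁] [AddCommGroup M₂]
    [AddCommGroup M₃] [AddCommGroup M₄] [Module ℝ M₁] [Module ℝ M₂] [Module ℝ M₃] [Module ℝ M₄]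
    (f : M₁ →ₗ[ℝ] M₂) (g : M₃ →ₗ[ℝ] M₄) :
    LinearMap.range (f.prodMap g) = (LinearMap.range f).prod (LinearMap.range g) := by
  ext ⟨a, b⟩
  simp only [LinearMap.mem_range, LinearMap.prodMap_apply, Submodule.mem_prod, Prod.ext_iff]
  constructor
  · rintro ⟨⟨x, y⟩, h1, h2⟩; exact ⟨⟨x, h1⟩, ⟨y, h2⟩⟩
  · rintro ⟨⟨x, hx⟩, ⟨y, hy⟩⟩; exact ⟨(x, y), hx, hy⟩

lemma finrank_submodule_prod {V W : Type*} [AddCommGroup V] [AddCommGroup W]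
    [Module ℝ V] [Module ℝ W] [FiniteDimensional ℝ V] [FiniteDimensional ℝ W]
    (S : Submodule ℝ V) (T : Submodule ℝ W) :
    finrank ℝ (S.prod T) = finrank ℝ S + finrank ℝ T := by
  have e : ↥(S.prod T) ≃ₗ[ℝ] ↥S × ↥T :=
    { toFun := fun x => (⟨x.1.1, x.2.1⟩, ⟨x.1.2, x.2.2⟩)
      invFun := fun p => ⟨(p.1.1, p.2.1), ⟨p.1.2, p.2.2⟩⟩
      map_add' := fun _ _ => rfl
      map_smul' := fun _ _ => rfl
      left_inv := fun _ => rfl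
      right_inv := fun _ => rfl }
  rw [e.finrank_eq, Module.finrank_prod]

lemma rank_fromBlocks_diag {a b c d : Type*} [Fintype a] [Fintype b] [Fintype c] [Fintype d]
    (A : Matrix a b ℝ) (D : Matrix c d ℝ) :
    (fromBlocks A 0 0 D).rank = A.rank + D.rank := by
  have key : Matrix.mulVecLin (fromBlocks A 0 0 D) =
      ((LinearEquiv.sumArrowLequivProdArrow a c ℝ ℝ).symm : ((a → ℝ) × (c → ℝ)) →ₗ[ℝ] (a ⊕ c → ℝ))
        ∘ₗ (A.mulVecLin.prodMap D.mulVecLin)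
        ∘ₗ ((LinearEquiv.sumArrowLequivProdArrow b d ℝ ℝ : (b ⊕ d → ℝ) ≃ₗ[ℝ] (b → ℝ) × (d → ℝ)) :
            (b ⊕ d → ℝ) →ₗ[ℝ] (b → ℝ) × (d → ℝ)) := by
    apply LinearMap.ext
    intro x
    funext i
    cases i <;>
      simp [Matrix.mulVecLin, Matrix.fromBlocks_mulVec, LinearEquiv.sumArrowLequivProdArrow,
        Equiv.sumArrowEquivProdArrow]
  rw [Matrix.rank, key]
  rw [LinearMap.range_comp, LinearMap.range_comp]
  rw [LinearEquiv.range, Submodule.map_top]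
  rw [LinearEquiv.finrank_map_eq]
  rw [range_prodMap', finrank_submodule_prod, Matrix.rank, Matrix.rank]

variable {R : Type*} [CommRing R]
variable {ρ κ α β γ : Type*}

lemma fromColumns_add (x x' : Matrix ρ α R) (y y' : Matrix ρ β R) :
    fromCols x y + fromCols x' y' = fromCols (x + x') (y + y') := by
  ext i j
  rcases j with j | j <;> simp [fromCols]

lemma triple_mul_triple [Fintype α] [Fintype β] [Fintype γ]
    (a : Matrix ρ α R) (b : Matrix ρ β R) (c : Matrix ρ γ R)
    (S1 : Matrix α κ R) (S2 : Matrix β κ R) (S3 : Matrix γ κ R) :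
    fromCols a (fromCols b c) * fromRows S1 (fromRows S2 S3)
      = a * S1 + (b * S2 + c * S3) := by
  rw [fromCols_mul_fromRows, fromCols_mul_fromRows]

lemma one_triple [DecidableEq α] [DecidableEq β] [DecidableEq γ] :
    (1 : Matrix (α ⊕ (β ⊕ γ)) (α ⊕ (β ⊕ γ)) R)
      = fromRows (fromCols 1 (fromCols 0 0))
          (fromRows (fromCols 0 (fromCols 1 0))
                    (fromCols 0 (fromCols 0 1))) := by
  ext i j
  rcases i with i | (i | i) <;> rcases j with j | (j | j) <;>
    simp [Matrix.one_apply]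

lemma rank_triple {m r n pdim N : ℕ}
    (P : Matrix (Fin pdim) (Fin m) ℝ) (Q : Matrix (Fin pdim) (Fin r) ℝ)
    (R : Matrix (Fin pdim) (Fin n) ℝ)
    (U : Matrix (Fin m) (Fin N) ℝ) (W : Matrix (Fin r) (Fin N) ℝ) (X : Matrix (Fin n) (Fin N) ℝ)
    (hZ : (fromRows U (fromRows W X)).rank = m + r + n) :
    (fromRows U (fromRows (P * U + (Q * W + R * X)) X)).rank = m + n + Q.rank := by
  set Z := fromRows U (fromRows W X) with hZdef
  set Mq : Matrix (Fin m ⊕ (Fin pdim ⊕ Fin n)) (Fin m ⊕ (Fin r ⊕ Fin n)) ℝ :=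
    fromRows (fromCols 1 (fromCols 0 0))
      (fromRows (fromCols P (fromCols Q R))
                (fromCols 0 (fromCols 0 1))) with hMq
  have hfact : fromRows U (fromRows (P * U + (Q * W + R * X)) X) = Mq * Z := by
    rw [hMq, hZdef, fromRows_mul, fromRows_mul,
      triple_mul_triple, triple_mul_triple, triple_mul_triple]
    simp
  have hcard : Z.rank = Fintype.card (Fin m ⊕ (Fin r ⊕ Fin n)) := by
    simp only [Fintype.card_sum, Fintype.card_fin]
    omega
  rw [hfact, rank_mul_of_full_row _ _ hcard]
  -- row operations to zero out P and R
  set E : Matrix (Fin m ⊕ (Fin pdim ⊕ Fin n)) (Fin m ⊕ (Fin pdim ⊕ Fin n)) ℝ :=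
    fromRows (fromCols 1 (fromCols 0 0))
      (fromRows (fromCols (-P) (fromCols 1 (-R)))
                (fromCols 0 (fromCols 0 1))) with hE
  set E' : Matrix (Fin m ⊕ (Fin pdim ⊕ Fin n)) (Fin m ⊕ (Fin pdim ⊕ Fin n)) ℝ :=
    fromRows (fromCols 1 (fromCols 0 0))
      (fromRows (fromCols P (fromCols 1 R))
                (fromCols 0 (fromCols 0 1))) with hE'
  have hEE' : E * E' = 1 := by
    rw [hE, hE', one_triple, fromRows_mul, fromRows_mul,
      triple_mul_triple, triple_mul_triple, triple_mul_triple]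
    simp [Matrix.mul_fromCols, fromColumns_add, Matrix.neg_mul]
  set Mq' : Matrix (Fin m ⊕ (Fin pdim ⊕ Fin n)) (Fin m ⊕ (Fin r ⊕ Fin n)) ℝ :=
    fromRows (fromCols 1 (fromCols 0 0))
      (fromRows (fromCols 0 (fromCols Q 0))
                (fromCols 0 (fromCols 0 1))) with hMq'
  have hmul : E * Mq = Mq' := by
    rw [hE, hMq, hMq', fromRows_mul, fromRows_mul,
      triple_mul_triple, triple_mul_triple, triple_mul_triple]
    simp [Matrix.mul_fromCols, fromColumns_add, Matrix.neg_mul]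
  have hrk : Mq.rank = Mq'.rank := by
    rw [← hmul, rank_mul_eq_right_of_isUnit_det E Mq (isUnit_det_of_right_inverse hEE')]
  rw [hrk]
  -- permute to block diagonal
  set er : Fin m ⊕ (Fin pdim ⊕ Fin n) ≃ (Fin m ⊕ Fin n) ⊕ Fin pdim :=
    (Equiv.sumCongr (Equiv.refl _) (Equiv.sumComm _ _)).trans (Equiv.sumAssoc _ _ _).symm
  set ec : Fin m ⊕ (Fin r ⊕ Fin n) ≃ (Fin m ⊕ Fin n) ⊕ Fin r :=
    (Equiv.sumCongr (Equiv.refl _) (Equiv.sumComm _ _)).trans (Equiv.sumAssoc _ _ _).symm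
  have hperm : Mq' = (fromBlocks (1 : Matrix (Fin m ⊕ Fin n) (Fin m ⊕ Fin n) ℝ) 0 0 Q).submatrix
      er ec := by
    ext i j
    rcases i with i | (i | i) <;> rcases j with j | (j | j) <;>
      simp [hMq', er, ec, fromBlocks, Equiv.sumAssoc, Equiv.sumComm,
        Matrix.one_apply, Matrix.submatrix_apply]
  rw [hperm, rank_submatrix_equiv, rank_fromBlocks_diag, Matrix.rank_one]
  simp [Fintype.card_sum]

end helpers

/-- Data-driven check of the UIO solvability condition:
`rank [U; Ẏ; X] = rank [U; X; Ẋ]` iff `rank (C Bᵖ) = rank Bᵖ`. -/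
theorem stmt8 {n m r pdim N : ℕ}
    (A : Matrix (Fin n) (Fin n) ℝ)
    (Bm : Matrix (Fin n) (Fin m) ℝ) (Bp : Matrix (Fin n) (Fin r) ℝ)
    (C : Matrix (Fin pdim) (Fin n) ℝ)
    (U : Matrix (Fin m) (Fin N) ℝ) (W : Matrix (Fin r) (Fin N) ℝ)
    (X : Matrix (Fin n) (Fin N) ℝ)
    (hrank : (Matrix.fromRows U (Matrix.fromRows W X)).rank = m + r + n)
    (Xdot : Matrix (Fin n) (Fin N) ℝ) (hXdot : Xdot = A * X + Bm * U + Bp * W)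
    (Ydot : Matrix (Fin pdim) (Fin N) ℝ) (hYdot : Ydot = C * Xdot) :
    (Matrix.fromRows U (Matrix.fromRows Ydot X)).rank =
        (Matrix.fromRows U (Matrix.fromRows X Xdot)).rank ↔
      (C * Bp).rank = Bp.rank := by
  have hY : Ydot = (C * Bm) * U + ((C * Bp) * W + (C * A) * X) := by
    rw [hYdot, hXdot]
    simp only [Matrix.mul_add, ← Matrix.mul_assoc]
    abel
  have hX' : Xdot = Bm * U + (Bp * W + A * X) := by
    rw [hXdot]; abel
  have h1 : (fromRows U (fromRows Ydot X)).rank = m + n + (C * Bp).rank := by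
    rw [hY]; exact rank_triple _ _ _ _ _ _ hrank
  have hswap : fromRows U (fromRows X Xdot)
      = (fromRows U (fromRows Xdot X)).submatrix
          (Equiv.sumCongr (Equiv.refl (Fin m)) (Equiv.sumComm (Fin n) (Fin n)))
          (Equiv.refl (Fin N)) := by
    ext i j
    rcases i with i | (i | i) <;> simp
  have h2 : (fromRows U (fromRows X Xdot)).rank = m + n + Bp.rank := by
    rw [hswap, rank_submatrix_equiv, hX']
    exact rank_triple _ _ _ _ _ _ hrank
  rw [h1, h2]
  omega
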